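/- Let f : ℝⁿ → ℝ be differentiable with ∇f Lipschitz continuous with constant κ_lg > 0, i.e., ‖∇f(y) − ∇f(z)‖ ≤ κ_lg‖y − z‖ for all y, z ∈ ℝⁿ. Let x ∈ ℝⁿ, σ > 0, and let v¹, …, v^p ∈ ℝⁿ satisfy ‖vʲ‖ ≤ κ_bv for all j = 1, …, p. Let A ∈ ℝ^{p×n} be the matrix whose j-th row is (vʲ)ᵀ, and let y ∈ ℝ^p have entries yʲ = f(x + σvʲ) − f(x). Then ‖A∇f(x) − σ⁻¹y‖ ≤ (√p/2) κ_lg κ_bv² σ. -/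

import Mathlib

open Filter Matrix MeasureTheory InnerProductSpace

/-- The map `x ↦ A x` from `ℝⁿ` to `ℝᵖ` with the Euclidean (`ℓ²`) structure. -/
noncomputable def mulVecE {p n : ℕ} (A : Matrix (Fin p) (Fin n) ℝ)
    (x : EuclideanSpace ℝ (Fin n)) : EuclideanSpace ℝ (Fin p) :=
  (WithLp.equiv 2 (Fin p → ℝ)).symm (A.mulVec ((WithLp.equiv 2 (Fin n → ℝ)) x))

lemma taylor_bound {n : ℕ} (f : EuclideanSpace ℝ (Fin n) → ℝ)
    (g : EuclideanSpace ℝ (Fin n) → EuclideanSpace ℝ (Fin n))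
    (hf : ∀ z, HasGradientAt f (g z) z)
    (κlg : ℝ) (hκlg : 0 < κlg)
    (hlip : ∀ y z, ‖g y - g z‖ ≤ κlg * ‖y - z‖)
    (x h : EuclideanSpace ℝ (Fin n)) :
    abs (f (x + h) - f x - ⟪g x, h⟫_ℝ) ≤ κlg / 2 * ‖h‖ ^ 2 := by
  have hgc : Continuous g := by
    rw [Metric.continuous_iff]
    intro a ε hε
    refine ⟨ε / κlg, by positivity, fun b hb => ?_⟩
    rw [dist_eq_norm] at *
    calc ‖g b - g a‖ ≤ κlg * ‖b - a‖ := hlip b a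
      _ < κlg * (ε / κlg) := by gcongr
      _ = ε := by field_simp
  have key : ∀ t : ℝ, HasDerivAt (fun s : ℝ => f (x + s • h))
      (⟪g (x + t • h), h⟫_ℝ) t := by
    intro t
    have h1 : HasDerivAt (fun s : ℝ => x + s • h) h t := by
      simpa using ((hasDerivAt_id t).smul_const h).const_add x
    have h2 := ((hf (x + t • h)).hasFDerivAt).comp_hasDerivAt t h1
    simp [InnerProductSpace.toDual] at h2; exact h2
  have hcint : Continuous fun t : ℝ => ⟪g (x + t • h), h⟫_ℝ := by
    exact (hgc.comp (by continuity)).inner continuous_const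
  have hint : f (x + h) - f x = ∫ t in (0:ℝ)..1, ⟪g (x + t • h), h⟫_ℝ := by
    have := intervalIntegral.integral_eq_sub_of_hasDerivAt
      (f := fun s : ℝ => f (x + s • h)) (a := 0) (b := 1)
      (fun t _ => key t) (hcint.intervalIntegrable 0 1)
    simp only [one_smul, zero_smul, add_zero] at this
    exact this.symm
  have hsplit : f (x + h) - f x - ⟪g x, h⟫_ℝ
      = ∫ t in (0:ℝ)..1, (⟪g (x + t • h), h⟫_ℝ - ⟪g x, h⟫_ℝ) := by
    rw [intervalIntegral.integral_sub (hcint.intervalIntegrable 0 1)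
      (intervalIntegrable_const), hint]
    simp
  rw [hsplit]
  have hb : ∀ t ∈ Set.Icc (0:ℝ) 1,
      ‖⟪g (x + t • h), h⟫_ℝ - ⟪g x, h⟫_ℝ‖ ≤ κlg * t * ‖h‖ ^ 2 := by
    intro t ht
    have : ⟪g (x + t • h), h⟫_ℝ - ⟪g x, h⟫_ℝ = ⟪g (x + t • h) - g x, h⟫_ℝ := by
      rw [inner_sub_left]
    rw [this]
    calc ‖⟪g (x + t • h) - g x, h⟫_ℝ‖ ≤ ‖g (x + t • h) - g x‖ * ‖h‖ :=
          norm_inner_le_norm _ _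
      _ ≤ (κlg * ‖(x + t • h) - x‖) * ‖h‖ := by gcongr; exact hlip _ _
      _ = κlg * (|t| * ‖h‖) * ‖h‖ := by rw [add_sub_cancel_left, norm_smul]; norm_num
      _ = κlg * t * ‖h‖ ^ 2 := by rw [abs_of_nonneg ht.1]; ring
  have := intervalIntegral.norm_integral_le_of_norm_le
    (g := fun t : ℝ => κlg * t * ‖h‖ ^ 2) (a := 0) (b := 1)
    (μ := volume)
    (f := fun t : ℝ => ⟪g (x + t • h), h⟫_ℝ - ⟪g x, h⟫_ℝ) zero_le_one ?_ ?_
  · have hval : ∫ t in (0:ℝ)..1, κlg * t * ‖h‖ ^ 2 = κlg / 2 * ‖h‖ ^ 2 := by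
      rw [show (fun t : ℝ => κlg * t * ‖h‖ ^ 2) = fun t : ℝ => (κlg * ‖h‖ ^ 2) * t from
        by funext t; ring]
      rw [intervalIntegral.integral_const_mul, integral_id]
      norm_num; ring
    rw [hval] at this
    rwa [Real.norm_eq_abs] at this
  · filter_upwards with t ht
    exact hb t ⟨le_of_lt (by simpa using ht.1), by simpa using ht.2⟩
  · exact (Continuous.intervalIntegrable (by continuity) 0 1)

theorem interpolation_residual_bound {n p : ℕ}
    (f : EuclideanSpace ℝ (Fin n) → ℝ)
    (g : EuclideanSpace ℝ (Fin n) → EuclideanSpace ℝ (Fin n))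
    (hf : ∀ z, HasGradientAt f (g z) z)
    (κlg : ℝ) (hκlg : 0 < κlg)
    (hlip : ∀ y z, ‖g y - g z‖ ≤ κlg * ‖y - z‖)
    (x : EuclideanSpace ℝ (Fin n)) (σ : ℝ) (hσ : 0 < σ)
    (v : Fin p → EuclideanSpace ℝ (Fin n)) (κbv : ℝ)
    (hv : ∀ j, ‖v j‖ ≤ κbv)
    (A : Matrix (Fin p) (Fin n) ℝ) (hA : ∀ j i, A j i = v j i)
    (y : EuclideanSpace ℝ (Fin p)) (hy : ∀ j, y j = f (x + σ • v j) - f x) :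
    ‖mulVecE A (g x) - σ⁻¹ • y‖ ≤ (Real.sqrt p / 2) * κlg * κbv ^ 2 * σ := by
  have hcomp : ∀ j, |(mulVecE A (g x) - σ⁻¹ • y) j| ≤ κlg / 2 * κbv ^ 2 * σ := by
    intro j
    have h1 : (mulVecE A (g x) - σ⁻¹ • y) j
        = ⟪g x, v j⟫_ℝ - σ⁻¹ * (f (x + σ • v j) - f x) := by
      simp only [PiLp.sub_apply, PiLp.smul_apply, smul_eq_mul, hy j]
      congr 1
      simp only [mulVecE, WithLp.equiv_symm_apply, PiLp.toLp_apply, Matrix.mulVec, dotProduct]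
      rw [real_inner_comm]
      simp [PiLp.inner_apply, hA, RCLike.inner_apply, mul_comm]
    have h2 := taylor_bound f g hf κlg hκlg hlip x (σ • v j)
    have hveq : ⟪g x, σ • v j⟫_ℝ = σ * ⟪g x, v j⟫_ℝ := real_inner_smul_right _ _ _
    have hnorm : ‖σ • v j‖ ^ 2 = σ ^ 2 * ‖v j‖ ^ 2 := by
      rw [norm_smul]; rw [Real.norm_eq_abs, abs_of_pos hσ]; ring
    rw [h1]
    have : ⟪g x, v j⟫_ℝ - σ⁻¹ * (f (x + σ • v j) - f x)
        = -(σ⁻¹ * (f (x + σ • v j) - f x - ⟪g x, σ • v j⟫_ℝ)) := by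
      rw [hveq]; field_simp; ring
    rw [this, abs_neg, abs_mul, abs_of_pos (inv_pos.mpr hσ)]
    have hvj2 : ‖v j‖ ^ 2 ≤ κbv ^ 2 := by
      have := hv j; nlinarith [norm_nonneg (v j)]
    calc σ⁻¹ * |f (x + σ • v j) - f x - ⟪g x, σ • v j⟫_ℝ|
        ≤ σ⁻¹ * (κlg / 2 * (σ ^ 2 * ‖v j‖ ^ 2)) := by
          rw [← hnorm]; gcongr
      _ = κlg / 2 * ‖v j‖ ^ 2 * σ := by field_simp
      _ ≤ κlg / 2 * κbv ^ 2 * σ := by gcongr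
  have hB : (0:ℝ) ≤ κlg / 2 * κbv ^ 2 * σ := by
    have : (0:ℝ) ≤ κbv ^ 2 := sq_nonneg _
    positivity
  have hnorm : ‖mulVecE A (g x) - σ⁻¹ • y‖
      ≤ Real.sqrt p * (κlg / 2 * κbv ^ 2 * σ) := by
    rw [EuclideanSpace.norm_eq]
    calc Real.sqrt (∑ j, ‖(mulVecE A (g x) - σ⁻¹ • y) j‖ ^ 2)
        ≤ Real.sqrt (∑ _j : Fin p, (κlg / 2 * κbv ^ 2 * σ) ^ 2) := by
          apply Real.sqrt_le_sqrt
          apply Finset.sum_le_sum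
          intro j _
          rw [Real.norm_eq_abs]
          exact pow_le_pow_left₀ (abs_nonneg _) (hcomp j) 2
      _ = Real.sqrt p * (κlg / 2 * κbv ^ 2 * σ) := by
          rw [Finset.sum_const, Finset.card_fin, nsmul_eq_mul,
            Real.sqrt_mul (by positivity), Real.sqrt_sq hB]
  calc ‖mulVecE A (g x) - σ⁻¹ • y‖ ≤ Real.sqrt p * (κlg / 2 * κbv ^ 2 * σ) := hnorm
    _ = (Real.sqrt p / 2) * κlg * κbv ^ 2 * σ := by ring
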